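/- Every Σ-irreducible word over X is of the form p q^{-1}, where p and q are monotone positive words (MP-words), i.e., p = x_{i_1} x_{i_2} ⋯ x_{i_m} with i_1 ≤ i_2 ≤ ⋯ ≤ i_m, and q^{-1} = x_{j_k}^{-1} ⋯ x_{j_1}^{-1} with j_1 ≤ j_2 ≤ ⋯ ≤ j_k. -/

import Mathlib

abbrev Letter := ℕ × Bool
abbrev Word := List Letter

def pos (i : ℕ) : Letter := (i, true)
def neg (i : ℕ) : Letter := (i, false)

/-- The rewriting rules of the system Σ. -/
inductive SigmaRule : Word → Word → Prop
  | cancel (i : ℕ) : SigmaRule [neg i, pos i] [pos i, neg i]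
  | negPos (i j : ℕ) (h : i < j) : SigmaRule [neg i, pos j] [pos (j+1), neg i]
  | posNegInv (i j : ℕ) (h : i < j) : SigmaRule [neg j, pos i] [pos i, neg (j+1)]
  | posPos (i j : ℕ) (h : i < j) : SigmaRule [pos j, pos i] [pos i, pos (j+1)]
  | negNeg (i j : ℕ) (h : i < j) : SigmaRule [neg i, neg j] [neg (j+1), neg i]

/-- One rewriting step: replace an occurrence of a left-hand side by the right-hand side. -/
def Step (u v : Word) : Prop :=
  ∃ a b l r : Word, SigmaRule l r ∧ u = a ++ l ++ b ∧ v = a ++ r ++ b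

/-- A word is Σ-irreducible if no rule applies. -/
def SigmaIrreducible (w : Word) : Prop := ∀ v, ¬ Step w v

/-- Maximal subscript occurring in a positive word (0 for the empty word). -/
def mu (l : List ℕ) : ℕ := l.foldr max 0

lemma step_tail {a : Letter} {w v : Word} (h : Step w v) : Step (a :: w) (a :: v) := by
  obtain ⟨s, b, l, r, hr, hu, hv⟩ := h
  exact ⟨a :: s, b, l, r, hr, by simp [hu], by simp [hv]⟩

lemma tail_irred {a : Letter} {w : Word} (hw : SigmaIrreducible (a :: w)) :
    SigmaIrreducible w := fun v hv => hw (a :: v) (step_tail hv)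

lemma head_not_rule {x y : Letter} {t : Word} (hw : SigmaIrreducible (x :: y :: t))
    {r : Word} (hr : SigmaRule [x, y] r) : False :=
  hw (r ++ t) ⟨[], t, [x, y], r, hr, by simp, by simp⟩

lemma no_neg_pos {i j : ℕ} {t : Word} (hw : SigmaIrreducible (neg i :: pos j :: t)) : False := by
  rcases lt_trichotomy i j with h | h | h
  · exact head_not_rule hw (SigmaRule.negPos i j h)
  · subst h; exact head_not_rule hw (SigmaRule.cancel i)
  · exact head_not_rule hw (SigmaRule.posNegInv j i h)

lemma pos_pos_le {i j : ℕ} {t : Word} (hw : SigmaIrreducible (pos i :: pos j :: t)) : i ≤ j := by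
  by_contra h
  exact head_not_rule hw (SigmaRule.posPos j i (lt_of_not_ge h))

lemma neg_neg_le {i j : ℕ} {t : Word} (hw : SigmaIrreducible (neg i :: neg j :: t)) : j ≤ i := by
  by_contra h
  exact head_not_rule hw (SigmaRule.negNeg i j (lt_of_not_ge h))

/-- Every Σ-irreducible word has the form `p q⁻¹` where `p`, `q` are MP-words. -/
theorem irreducible_eq_MP_pair (w : Word) (hw : SigmaIrreducible w) :
    ∃ p q : List ℕ, List.Pairwise (· ≤ ·) p ∧ List.Pairwise (· ≤ ·) q ∧
      w = p.map pos ++ (q.reverse.map neg) := by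
  induction w with
  | nil => exact ⟨[], [], by simp, by simp, rfl⟩
  | cons x w' ih =>
    obtain ⟨p, q, hp, hq, heq⟩ := ih (tail_irred hw)
    subst heq
    obtain ⟨i, b⟩ := x
    cases b
    · -- x = neg i
      cases p with
      | cons j p' => exact (no_neg_pos (i := i) (j := j) (by simpa [pos, neg] using hw)).elim
      | nil =>
        rcases h : q.reverse with _ | ⟨k, r⟩
        · have : q = [] := by simpa using congrArg List.reverse h
          subst this
          exact ⟨[], [i], by simp, by simp, by simp [neg]⟩
        · refine ⟨[], q ++ [i], by simp, ?_, by simp [h, neg]⟩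
          have hw2 : SigmaIrreducible (neg i :: neg k :: r.map neg) := by
            simpa [h, neg] using hw
          have hki : k ≤ i := neg_neg_le hw2
          have hqrev : List.Pairwise (· ≥ ·) (k :: r) := by
            rw [← h]; exact List.pairwise_reverse.mpr hq
          rw [List.pairwise_append]
          refine ⟨hq, by simp, ?_⟩
          intro a ha b hb
          simp at hb; subst hb
          have ha' : a ∈ k :: r := by rw [← h]; simpa using ha
          rcases List.mem_cons.1 ha' with h1 | h1
          · exact h1 ▸ hki
          · exact le_trans ((List.pairwise_cons.1 hqrev).1 a h1) hki
    · -- x = pos i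
      cases p with
      | nil => exact ⟨[i], q, by simp, hq, by simp [pos]⟩
      | cons j p' =>
        have hw2 : SigmaIrreducible (pos i :: pos j :: (p'.map pos ++ q.reverse.map neg)) := by
          simpa [pos] using hw
        have hij : i ≤ j := pos_pos_le hw2
        refine ⟨i :: j :: p', q, ?_, hq, by simp [pos]⟩
        rw [List.pairwise_cons]
        refine ⟨?_, hp⟩
        intro a ha
        rcases List.mem_cons.1 ha with h1 | h1
        · exact h1 ▸ hij
        · exact le_trans hij ((List.pairwise_cons.1 hp).1 a h1)
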